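/- arXiv:1012.5059 — 11 statements merged into one kernel-verified Lean document; each statement's English description precedes it below -/
import Mathlib

section
/- The weight function w on closed conditional expressions, defined by w(a)=w(T)=w(F)=2 for atoms a and w(x ◁ y ▷ z) = (w(x)·w(z))^{w(y)}, strictly decreases under each rewrite rule obtained by orienting the CP axioms left to right: w(x ◁ T ▷ y) > w(x), w(x ◁ F ▷ y) > w(y), w(T ◁ x ▷ F) > w(x), and w(x ◁ (y ◁ z ▷ u) ▷ v) > w((x ◁ y ▷ v) ◁ z ▷ (x ◁ u ▷ v)), for all closed terms x,y,z,u,v. -/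
inductive CE (A : Type) : Type
  | tt : CE A
  | ff : CE A
  | atom : A → CE A
  | cond : CE A → CE A → CE A → CE A

/-- The weight function: w(a) = w(T) = w(F) = 2 and w(x ◁ y ▷ z) = (w x * w z) ^ (w y). -/
def w {A : Type} : CE A → ℕ
  | .tt => 2
  | .ff => 2
  | .atom _ => 2
  | .cond x y z => (w x * w z) ^ (w y)

lemma two_le_w {A : Type} (t : CE A) : 2 ≤ w t := by
  induction t with
  | tt => simp [w]
  | ff => simp [w]
  | atom a => simp [w]
  | cond x y z hx hy hz =>
    have h4 : 2 ≤ w x * w z := le_trans hx (Nat.le_mul_of_pos_right _ (by omega))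
    calc 2 ≤ w x * w z := h4
      _ ≤ (w x * w z) ^ (w y) := Nat.le_self_pow (by omega) _

lemma key_exp (p q k : ℕ) (hp : 2 ≤ p) (hq : 2 ≤ q) (hk : 2 ≤ k) :
    (p + q) * k < (p * q) ^ k := by
  have h1 : p + q ≤ p * q := by nlinarith
  have h2 : k < (p * q) ^ (k - 1) := by
    have hk2 : k < 2 ^ k := Nat.lt_two_pow_self (n := k)
    have : 2 ^ k ≤ 4 ^ (k - 1) := by
      have : (4 : ℕ) ^ (k - 1) = 2 ^ (2 * (k - 1)) := by
        rw [pow_mul]; norm_num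
      rw [this]
      exact Nat.pow_le_pow_right (by norm_num) (by omega)
    have h4 : (4 : ℕ) ^ (k - 1) ≤ (p * q) ^ (k - 1) :=
      Nat.pow_le_pow_left (by nlinarith) _
    omega
  calc (p + q) * k ≤ (p * q) * k := Nat.mul_le_mul_right _ h1
    _ < (p * q) * (p * q) ^ (k - 1) := by
        have hpq : 0 < p * q := by positivity
        exact (Nat.mul_lt_mul_left hpq).mpr h2
    _ = (p * q) ^ k := by
        rw [← pow_succ']
        congr 1
        omega

theorem weight_decreases (A : Type) (x y z u v : CE A) :
    w (.cond x .tt y) > w x ∧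
    w (.cond x .ff y) > w y ∧
    w (.cond .tt x .ff) > w x ∧
    w (.cond x (.cond y z u) v) > w (.cond (.cond x y v) z (.cond x u v)) := by
  have hx := two_le_w x
  have hy := two_le_w y
  have hz := two_le_w z
  have hu := two_le_w u
  have hv := two_le_w v
  refine ⟨?_, ?_, ?_, ?_⟩
  · show w x < (w x * w y) ^ (w CE.tt)
    simp only [w]
    calc w x < w x * w y := by nlinarith
      _ ≤ (w x * w y) ^ 2 := Nat.le_self_pow (by norm_num) _
  · show w y < (w x * w y) ^ (w CE.ff)
    simp only [w]
    calc w y < w x * w y := by nlinarith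
      _ ≤ (w x * w y) ^ 2 := Nat.le_self_pow (by norm_num) _
  · show w x < (w CE.tt * w CE.ff) ^ (w x)
    simp only [w]
    calc w x < 2 ^ (w x) := Nat.lt_two_pow_self
      _ ≤ (2 * 2) ^ (w x) := Nat.pow_le_pow_left (by norm_num) _
  · show w (CE.cond x (CE.cond y z u) v) > w (CE.cond (CE.cond x y v) z (CE.cond x u v))
    simp only [w]
    have hrw : (w x * w v) ^ w y * ((w x * w v) ^ w u) = (w x * w v) ^ (w y + w u) := by
      rw [pow_add]
    rw [hrw, ← pow_mul]
    apply Nat.pow_lt_pow_right (by nlinarith)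
    exact key_exp (w y) (w u) (w z) hy hu hz
end

section
/- The term rewriting system obtained by orienting the four CP axioms from left to right is strongly normalizing on closed conditional expressions. -/
/-- One-step rewriting: the CP axioms oriented left to right, closed under contexts. -/
inductive Rw {A : Type} : CE A → CE A → Prop
  | r1 (x y) : Rw (.cond x .tt y) x
  | r2 (x y) : Rw (.cond x .ff y) y
  | r3 (x) : Rw (.cond .tt x .ff) x
  | r4 (x y z u v) : Rw (.cond x (.cond y z u) v) (.cond (.cond x y v) z (.cond x u v))
  | congL {x x'} (y z) : Rw x x' → Rw (.cond x y z) (.cond x' y z)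
  | congM {y y'} (x z) : Rw y y' → Rw (.cond x y z) (.cond x y' z)
  | congR {z z'} (x y) : Rw z z' → Rw (.cond x y z) (.cond x y z')

/-- Polynomial interpretation measure. -/
def CE.m {A : Type} : CE A → ℕ
  | .tt => 1
  | .ff => 1
  | .atom _ => 1
  | .cond x y z => y.m * (x.m + z.m + 1)

lemma CE.m_pos {A : Type} (t : CE A) : 1 ≤ t.m := by
  induction t with
  | tt => simp [CE.m]
  | ff => simp [CE.m]
  | atom a => simp [CE.m]
  | cond x y z hx hy hz =>
      simp only [CE.m]
      nlinarith

lemma Rw.m_lt {A : Type} {s t : CE A} (h : Rw s t) : t.m < s.m := by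
  induction h with
  | r1 x y => simp only [CE.m]; nlinarith [x.m_pos, y.m_pos]
  | r2 x y => simp only [CE.m]; nlinarith [x.m_pos, y.m_pos]
  | r3 x => simp only [CE.m]; nlinarith [x.m_pos]
  | r4 x y z u v =>
      simp only [CE.m]
      nlinarith [x.m_pos, y.m_pos, z.m_pos, u.m_pos, v.m_pos]
  | congL y z h ih =>
      simp only [CE.m]; nlinarith [y.m_pos, z.m_pos]
  | congM x z h ih =>
      simp only [CE.m]; nlinarith [x.m_pos, z.m_pos]
  | congR x y h ih =>
      simp only [CE.m]; nlinarith [x.m_pos, y.m_pos]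

/-- Strong normalization: there is no infinite rewrite sequence. -/
theorem rw_strongly_normalizing (A : Type) (f : ℕ → CE A) :
    ¬ (∀ n, Rw (f n) (f (n + 1))) := by
  intro h
  have key : ∀ n, (f n).m + n ≤ (f 0).m := by
    intro n
    induction n with
    | zero => simp
    | succ k ih => have := (h k).m_lt; omega
  have := key ((f 0).m + 1)
  have := (f ((f 0).m + 1)).m_pos
  omega
end

section
/- For every closed conditional expression t there exists a basic form t' such that CP proves t = t'. Here a basic form is a term generated by the grammar t ::= T | F | t1 ◁ a ▷ t2 with a an atom. -/
inductive Deriv {A : Type} (Ax : CE A → CE A → Prop) : CE A → CE A → Prop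
  | ax {t t'} : Ax t t' → Deriv Ax t t'
  | refl (t) : Deriv Ax t t
  | symm {t t'} : Deriv Ax t t' → Deriv Ax t' t
  | trans {t t' t''} : Deriv Ax t t' → Deriv Ax t' t'' → Deriv Ax t t''
  | congr {x x' y y' z z'} : Deriv Ax x x' → Deriv Ax y y' → Deriv Ax z z' →
      Deriv Ax (.cond x y z) (.cond x' y' z')
  | cp1 (x y) : Deriv Ax (.cond x .tt y) x
  | cp2 (x y) : Deriv Ax (.cond x .ff y) y
  | cp3 (x) : Deriv Ax (.cond .tt x .ff) x
  | cp4 (x y z u v) : Deriv Ax (.cond x (.cond y z u) v) (.cond (.cond x y v) z (.cond x u v))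

/-- Derivability from the CP axioms alone (no extra axioms). -/
def CP {A : Type} : CE A → CE A → Prop := Deriv (fun _ _ => False)

/-- Basic forms: T, F, and t1 ◁ a ▷ t2 with a an atom and t1, t2 basic forms. -/
inductive BasicForm {A : Type} : CE A → Prop
  | tt : BasicForm .tt
  | ff : BasicForm .ff
  | cond {t1 t2 : CE A} (a : A) : BasicForm t1 → BasicForm t2 →
      BasicForm (.cond t1 (.atom a) t2)


lemma cond_basic {A : Type} {y : CE A} (hy : BasicForm y) :
    ∀ x z : CE A, BasicForm x → BasicForm z →
    ∃ w : CE A, BasicForm w ∧ CP (.cond x y z) w := by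
  induction hy with
  | tt => exact fun x z hx _ => ⟨x, hx, Deriv.cp1 x z⟩
  | ff => exact fun x z _ hz => ⟨z, hz, Deriv.cp2 x z⟩
  | cond a h1 h2 ih1 ih2 =>
    intro x z hx hz
    obtain ⟨w1, hw1, d1⟩ := ih1 x z hx hz
    obtain ⟨w2, hw2, d2⟩ := ih2 x z hx hz
    exact ⟨.cond w1 (.atom a) w2, .cond a hw1 hw2,
      Deriv.trans (Deriv.cp4 x _ _ _ z) (Deriv.congr d1 (Deriv.refl _) d2)⟩

theorem exists_basic_form (A : Type) (t : CE A) :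
    ∃ t' : CE A, BasicForm t' ∧ CP t t' := by
  induction t with
  | tt => exact ⟨.tt, .tt, Deriv.refl _⟩
  | ff => exact ⟨.ff, .ff, Deriv.refl _⟩
  | atom a => exact ⟨.cond .tt (.atom a) .ff, .cond a .tt .ff,
      Deriv.symm (Deriv.cp3 _)⟩
  | cond x y z ihx ihy ihz =>
    obtain ⟨x', hx, dx⟩ := ihx
    obtain ⟨y', hy, dy⟩ := ihy
    obtain ⟨z', hz, dz⟩ := ihz
    obtain ⟨w, hw, dw⟩ := cond_basic hy x' z' hx hz
    exact ⟨w, hw, Deriv.trans (Deriv.congr dx dy dz) dw⟩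
end

section
/- In the equational theory CP extended with the axiom T ◁ x ▷ T = T, the equation x ◁ y ▷ x = x is derivable for all x, y. -/
/-- The extra axiom scheme T ◁ x ▷ T = T. -/
def AxOh {A : Type} : CE A → CE A → Prop :=
  fun s t => ∃ x : CE A, s = .cond .tt x .tt ∧ t = .tt

theorem cond_self_derivable (A : Type) (x y : CE A) :
    Deriv AxOh (.cond x y x) x := by
  apply Deriv.trans (Deriv.congr (Deriv.symm (Deriv.cp1 x x)) (Deriv.refl y) (Deriv.symm (Deriv.cp1 x x)))
  apply Deriv.trans (Deriv.symm (Deriv.cp4 x .tt y .tt x))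
  apply Deriv.trans (Deriv.congr (Deriv.refl x) (Deriv.ax ⟨y, rfl, rfl⟩) (Deriv.refl x))
  exact Deriv.cp1 x x
end

section
/- In CP, the identity y ◁ x ▷ z = z ◁ (F ◁ x ▷ T) ▷ y is derivable for all x, y, z. -/
theorem cp_flip (A : Type) (x y z : CE A) :
    CP (.cond y x z) (.cond z (.cond .ff x .tt) y) := by
  apply Deriv.symm
  apply Deriv.trans (Deriv.cp4 z .ff x .tt y)
  exact Deriv.congr (Deriv.cp2 z y) (Deriv.refl x) (Deriv.cp1 z y)
end

section
/- Every Hoare–McCarthy algebra satisfies the conditional equation: if T ◁ x ▷ T = T and T ◁ y ▷ T = T, then T ◁ x ▷ y = T ◁ y ▷ x. -/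
/-- A stateful proposition algebra (SPA): a two-sorted structure with conditional
expressions satisfying the CP axioms, states with a conditional, and apply/reply
operations satisfying (SPA1)-(SPA7). -/
structure SPA (A : Type) where
  C : Type
  S : Type
  tt : C
  ff : C
  atom : A → C
  cond : C → C → C → C
  scond : S → C → S → S
  rep : C → S → C
  app : C → S → S
  cp1 : ∀ x y, cond x tt y = x
  cp2 : ∀ x y, cond x ff y = y
  cp3 : ∀ x, cond tt x ff = x
  cp4 : ∀ x y z u v, cond x (cond y z u) v = cond (cond x y v) z (cond x u v)
  ts1 : ∀ s s', scond s tt s' = s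
  ts2 : ∀ s s', scond s ff s' = s'
  spa1 : ∀ s, rep tt s = tt
  spa2 : ∀ s, rep ff s = ff
  spa3 : ∀ x y z s, rep (cond x y z) s = cond (rep x (app y s)) (rep y s) (rep z (app y s))
  spa4 : ∀ s, app tt s = s
  spa5 : ∀ s, app ff s = s
  spa6 : ∀ x y z s, app (cond x y z) s = scond (app x (app y s)) (rep y s) (app z (app y s))
  spa7 : ∀ x s, rep x s = tt ∨ rep x s = ff
  spa8 : ∀ x y, (∀ s, rep x s = rep y s ∧ app x s = app y s) → x = y

/-- In any Hoare–McCarthy algebra (the conditional-expression reduct of an SPA):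
if T ◁ x ▷ T = T and T ◁ y ▷ T = T then T ◁ x ▷ y = T ◁ y ▷ x. -/
theorem hma_conditional_equation (A : Type) (P : SPA A) (x y : P.C)
    (hx : P.cond P.tt x P.tt = P.tt) (hy : P.cond P.tt y P.tt = P.tt) :
    P.cond P.tt x y = P.cond P.tt y x := by
  -- from hx/hy: app x s = s and app y s = s
  have hax : ∀ s, P.app x s = s := by
    intro s
    have h := congrArg (fun c => P.app c s) hx
    simp only [P.spa6, P.spa4] at h
    rcases P.spa7 x s with h1 | h1 <;> rw [h1] at h
    · rwa [P.ts1] at h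
    · rwa [P.ts2] at h
  have hay : ∀ s, P.app y s = s := by
    intro s
    have h := congrArg (fun c => P.app c s) hy
    simp only [P.spa6, P.spa4] at h
    rcases P.spa7 y s with h1 | h1 <;> rw [h1] at h
    · rwa [P.ts1] at h
    · rwa [P.ts2] at h
  apply P.spa8
  intro s
  constructor
  · rw [P.spa3, P.spa3, hax, hay, P.spa1]
    rcases P.spa7 x s with h1 | h1 <;> rcases P.spa7 y s with h2 | h2 <;>
      rw [h1, h2] <;> simp [P.cp1, P.cp2]
  · simp only [P.spa6, P.spa4, hax, hay]
    rcases P.spa7 x s with h1 | h1 <;> rcases P.spa7 y s with h2 | h2 <;>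
      rw [h1, h2] <;> simp [P.ts1, P.ts2]
end

section
/- For a set A of atoms with at least two elements, the initial algebra of CP + ⟨T ◁ x ▷ T = T⟩ is not a Hoare–McCarthy algebra; in particular, for distinct atoms a, b, the equations T ◁ a ▷ T = T and T ◁ b ▷ T = T hold in this algebra but T ◁ a ▷ b = T ◁ b ▷ a does not. -/
/-- Decision trees over atoms A. -/
inductive Tr (A : Type) : Type
  | leaf : Bool → Tr A
  | node : A → Tr A → Tr A → Tr A

namespace Tr

/-- Replace true-leaves by `u` and false-leaves by `v`. -/
def graft {A : Type} : Tr A → Tr A → Tr A → Tr A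
  | .leaf true,  u, _ => u
  | .leaf false, _, v => v
  | .node a l r, u, v => .node a (graft l u v) (graft r u v)

open Classical in
/-- Collapse nodes with identical children. -/
noncomputable def prune {A : Type} : Tr A → Tr A
  | .leaf b => .leaf b
  | .node a l r =>
      if prune l = prune r then prune l else .node a (prune l) (prune r)

theorem graft_id {A : Type} (t : Tr A) : graft t (.leaf true) (.leaf false) = t := by
  induction t with
  | leaf b => cases b <;> rfl
  | node a l r hl hr => simp [graft, hl, hr]

theorem graft_graft {A : Type} (t p q u v : Tr A) :
    graft (graft t p q) u v = graft t (graft p u v) (graft q u v) := by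
  induction t with
  | leaf b => cases b <;> rfl
  | node a l r hl hr => simp [graft, hl, hr]

theorem prune_idem {A : Type} (t : Tr A) : prune (prune t) = prune t := by
  induction t with
  | leaf b => rfl
  | node a l r hl hr =>
    by_cases h : prune l = prune r
    · simp [prune, h, hl, hr]
    · simp only [prune, if_neg h]
      rw [if_neg, hl, hr]
      rw [hl, hr]; exact h

theorem prune_graft_right {A : Type} (t u v : Tr A) :
    prune (graft t (prune u) (prune v)) = prune (graft t u v) := by
  induction t with
  | leaf b => cases b <;> simp [graft, prune_idem]
  | node a l r hl hr =>
    simp only [graft, prune]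
    rw [hl, hr]

theorem prune_graft_left {A : Type} (t u v : Tr A) :
    prune (graft (prune t) u v) = prune (graft t u v) := by
  induction t with
  | leaf b => rfl
  | node a l r hl hr =>
    by_cases h : l.prune = r.prune
    · have hc : (Tr.graft l u v).prune = (Tr.graft r u v).prune := by
        rw [← hl, ← hr, h]
      calc (Tr.graft (Tr.prune (.node a l r)) u v).prune
          = (Tr.graft l.prune u v).prune := by rw [prune, if_pos h]
        _ = (Tr.graft l u v).prune := hl
        _ = (Tr.graft (Tr.node a l r) u v).prune := by
            simp only [Tr.graft, prune]
            rw [if_pos hc]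
    · calc (Tr.graft (Tr.prune (.node a l r)) u v).prune
          = (Tr.graft (.node a l.prune r.prune) u v).prune := by
            rw [prune, if_neg h]
        _ = (Tr.graft (Tr.node a l r) u v).prune := by
            simp only [Tr.graft, prune]
            rw [hl, hr]

theorem prune_graft {A : Type} (t u v : Tr A) :
    prune (graft (prune t) (prune u) (prune v)) = prune (graft t u v) := by
  rw [prune_graft_left, prune_graft_right]

theorem prune_all_true {A : Type} (t : Tr A) :
    prune (graft t (.leaf true) (.leaf true)) = .leaf true := by
  induction t with
  | leaf b => cases b <;> rfl
  | node a l r hl hr => simp [graft, prune, hl, hr]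

end Tr

/-- Normal form of a conditional expression as a decision tree.
    `cond x y z` means `x ◁ y ▷ z` (condition in the middle). -/
def nf {A : Type} : CE A → Tr A
  | .tt => .leaf true
  | .ff => .leaf false
  | .atom a => .node a (.leaf true) (.leaf false)
  | .cond x y z => Tr.graft (nf y) (nf x) (nf z)

/-- Pruned normal form. -/
noncomputable def sem {A : Type} (t : CE A) : Tr A := Tr.prune (nf t)

theorem sem_sound {A : Type} {s t : CE A} (h : Deriv AxOh s t) : sem s = sem t := by
  induction h with
  | ax h =>
    obtain ⟨x, rfl, rfl⟩ := h
    show Tr.prune (Tr.graft (nf x) (.leaf true) (.leaf true)) = _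
    rw [Tr.prune_all_true]; rfl
  | refl t => rfl
  | symm _ ih => exact ih.symm
  | trans _ _ ih1 ih2 => exact ih1.trans ih2
  | congr _ _ _ ihx ihy ihz =>
    simp only [sem] at ihx ihy ihz
    show Tr.prune (Tr.graft (nf _) (nf _) (nf _)) = Tr.prune (Tr.graft (nf _) (nf _) (nf _))
    rw [← Tr.prune_graft, ihy, ihx, ihz, Tr.prune_graft]
  | cp1 x y =>
    show Tr.prune (Tr.graft (.leaf true) (nf x) (nf y)) = _
    rfl
  | cp2 x y => rfl
  | cp3 x =>
    show Tr.prune (Tr.graft (nf x) (.leaf true) (.leaf false)) = _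
    rw [Tr.graft_id]
    rfl
  | cp4 x y z u v =>
    show Tr.prune (Tr.graft (Tr.graft (nf z) (nf y) (nf u)) (nf x) (nf v)) = _
    rw [Tr.graft_graft]; rfl

/-- For distinct atoms a, b, the initial algebra of CP + ⟨T ◁ x ▷ T = T⟩ satisfies
T ◁ a ▷ T = T and T ◁ b ▷ T = T but not T ◁ a ▷ b = T ◁ b ▷ a; hence it fails the
conditional equation valid in every Hoare–McCarthy algebra and is not an HMA. -/
theorem initial_algebra_not_hma (A : Type) (a b : A) (hab : a ≠ b) :
    Deriv AxOh (.cond .tt (.atom a) .tt) (CE.tt : CE A) ∧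
    Deriv AxOh (.cond .tt (.atom b) .tt) (CE.tt : CE A) ∧
    ¬ Deriv AxOh (.cond .tt (.atom a) (.atom b)) (.cond (CE.tt : CE A) (.atom b) (.atom a)) := by
  refine ⟨Deriv.ax ⟨_, rfl, rfl⟩, Deriv.ax ⟨_, rfl, rfl⟩, ?_⟩
  intro h
  have hs := sem_sound h
  have h1 : sem (CE.cond .tt (.atom a) (.atom b)) =
      Tr.node a (.leaf true) (.node b (.leaf true) (.leaf false)) := by
    show Tr.prune (Tr.graft (Tr.node a (.leaf true) (.leaf false))
        (.leaf true) (Tr.node b (.leaf true) (.leaf false))) = _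
    simp [Tr.graft, Tr.prune]
  have h2 : sem (CE.cond .tt (.atom b) (.atom a)) =
      Tr.node b (.leaf true) (.node a (.leaf true) (.leaf false)) := by
    show Tr.prune (Tr.graft (Tr.node b (.leaf true) (.leaf false))
        (.leaf true) (Tr.node a (.leaf true) (.leaf false))) = _
    simp [Tr.graft, Tr.prune]
  rw [h1, h2] at hs
  exact hab (by injection hs)
end

section
/- In CP + ⟨T ◁ x ▷ T = T⟩, the closed terms T ◁ a ▷ b and T ◁ b ▷ a (for distinct atoms a, b) are not provably equal. -/
/-- Evaluation trees: leaves are booleans, internal nodes are labeled by atoms. -/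
inductive BT (A : Type) : Type
  | leaf : Bool → BT A
  | node : A → BT A → BT A → BT A

open Classical in
/-- Smart constructor collapsing nodes with equal children. -/
noncomputable def BT.mk {A : Type} (a : A) (l r : BT A) : BT A :=
  if l = r then l else .node a l r

/-- Grafting: replace true-leaves of `t` by `p` and false-leaves by `q`. -/
noncomputable def BT.subst {A : Type} : BT A → BT A → BT A → BT A
  | .leaf true, p, _ => p
  | .leaf false, _, q => q
  | .node a l r, p, q => BT.mk a (l.subst p q) (r.subst p q)

lemma BT.mk_self {A : Type} (a : A) (t : BT A) : BT.mk a t t = t := by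
  simp [BT.mk]

lemma BT.subst_mk {A : Type} (a : A) (l r p q : BT A) :
    (BT.mk a l r).subst p q = BT.mk a (l.subst p q) (r.subst p q) := by
  by_cases h : l = r
  · subst h; simp [BT.mk_self]
  · simp [BT.subst, BT.mk, h]

lemma BT.subst_same {A : Type} (t p : BT A) : t.subst p p = p := by
  induction t with
  | leaf b => cases b <;> rfl
  | node a l r ihl ihr => simp [BT.subst, ihl, ihr, BT.mk_self]

lemma BT.subst_assoc {A : Type} (t p q P Q : BT A) :
    (t.subst p q).subst P Q = t.subst (p.subst P Q) (q.subst P Q) := by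
  induction t with
  | leaf b => cases b <;> rfl
  | node a l r ihl ihr => simp [BT.subst, BT.subst_mk, ihl, ihr]

/-- Normal trees: no node has equal children. -/
def BT.Norm {A : Type} : BT A → Prop
  | .leaf _ => True
  | .node _ l r => l ≠ r ∧ l.Norm ∧ r.Norm

lemma BT.norm_mk {A : Type} (a : A) {l r : BT A} (hl : l.Norm) (hr : r.Norm) :
    (BT.mk a l r).Norm := by
  by_cases h : l = r
  · subst h; simpa [BT.mk]
  · simp only [BT.mk, if_neg h]
    exact ⟨h, hl, hr⟩

lemma BT.norm_subst {A : Type} {t p q : BT A} (ht : t.Norm) (hp : p.Norm) (hq : q.Norm) :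
    (t.subst p q).Norm := by
  induction t with
  | leaf b => cases b <;> assumption
  | node a l r ihl ihr =>
    exact BT.norm_mk a (ihl ht.2.1) (ihr ht.2.2)

lemma BT.subst_id {A : Type} {t : BT A} (ht : t.Norm) :
    t.subst (.leaf true) (.leaf false) = t := by
  induction t with
  | leaf b => cases b <;> rfl
  | node a l r ihl ihr =>
    have h1 := ihl ht.2.1
    have h2 := ihr ht.2.2
    simp [BT.subst, h1, h2, BT.mk, ht.1]

/-- The interpretation of conditional expressions as normal evaluation trees. -/
noncomputable def evalCE {A : Type} : CE A → BT A
  | .tt => .leaf true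
  | .ff => .leaf false
  | .atom a => .node a (.leaf true) (.leaf false)
  | .cond x y z => (evalCE y).subst (evalCE x) (evalCE z)

lemma evalCE_norm {A : Type} (t : CE A) : (evalCE t).Norm := by
  induction t with
  | tt => trivial
  | ff => trivial
  | atom a => exact ⟨by simp, trivial, trivial⟩
  | cond x y z ihx ihy ihz => exact BT.norm_subst ihy ihx ihz

lemma evalCE_sound {A : Type} {s t : CE A} (h : Deriv AxOh s t) : evalCE s = evalCE t := by
  induction h with
  | ax hax =>
    obtain ⟨x, rfl, rfl⟩ := hax
    simp [evalCE, BT.subst_same]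
  | refl t => rfl
  | symm _ ih => exact ih.symm
  | trans _ _ ih1 ih2 => exact ih1.trans ih2
  | congr _ _ _ ih1 ih2 ih3 => simp [evalCE, ih1, ih2, ih3]
  | cp1 x y => rfl
  | cp2 x y => rfl
  | cp3 x => exact BT.subst_id (evalCE_norm x)
  | cp4 x y z u v => exact BT.subst_assoc _ _ _ _ _

theorem not_provable_swap (A : Type) (a b : A) (hab : a ≠ b) :
    ¬ Deriv AxOh (.cond (CE.tt : CE A) (.atom a) (.atom b)) (.cond CE.tt (.atom b) (.atom a)) := by
  intro h
  have := evalCE_sound h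
  simp only [evalCE, BT.subst, BT.mk] at this
  have hne : ∀ (x : A), BT.leaf true ≠ BT.node x (BT.leaf true) (BT.leaf false) := by
    intro x h; cases h
  simp only [hne b, hne a, ↓reduceIte] at this
  exact hab (by injection this)
end

section
/- For each closed conditional expression t there exists an rp-basic form t' such that CP_rp proves t = t'. -/
/-- The axiom schemes (CPrp1) and (CPrp2), for each atom a. -/
def AxRp {A : Type} : CE A → CE A → Prop := fun s t =>
  (∃ (a : A) (x y z : CE A),
      s = .cond (.cond x (.atom a) y) (.atom a) z ∧
      t = .cond (.cond x (.atom a) x) (.atom a) z) ∨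
  (∃ (a : A) (x y z : CE A),
      s = .cond x (.atom a) (.cond y (.atom a) z) ∧
      t = .cond x (.atom a) (.cond z (.atom a) z))

/-- The side condition for rp-basic forms: the central condition (if present) is
different from a, or the term has the shape t' ◁ a ▷ t'. -/
def rpOK {A : Type} (a : A) : CE A → Prop
  | .cond x (.atom b) y => b ≠ a ∨ x = y
  | _ => True

/-- rp-basic forms. -/
inductive RpBasic {A : Type} : CE A → Prop
  | tt : RpBasic .tt
  | ff : RpBasic .ff
  | cond {t1 t2 : CE A} (a : A) : RpBasic t1 → RpBasic t2 → rpOK a t1 → rpOK a t2 →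
      RpBasic (.cond t1 (.atom a) t2)

/-- Basic forms: decision trees with atoms at central positions. -/
inductive Basic {A : Type} : CE A → Prop
  | tt : Basic .tt
  | ff : Basic .ff
  | cond {t1 t2 : CE A} (a : A) : Basic t1 → Basic t2 → Basic (.cond t1 (.atom a) t2)

lemma basic_cond {A : Type} {q : CE A} (hq : Basic q) :
    ∀ p r : CE A, Basic p → Basic r →
      ∃ s, Basic s ∧ Deriv AxRp (.cond p q r) s := by
  induction hq with
  | tt => exact fun p r hp _ => ⟨p, hp, Deriv.cp1 p r⟩
  | ff => exact fun p r _ hr => ⟨r, hr, Deriv.cp2 p r⟩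
  | cond b h1 h2 ih1 ih2 =>
    intro p r hp hr
    obtain ⟨s1, hs1, hd1⟩ := ih1 p r hp hr
    obtain ⟨s2, hs2, hd2⟩ := ih2 p r hp hr
    exact ⟨.cond s1 (.atom b) s2, .cond b hs1 hs2,
      (Deriv.cp4 _ _ _ _ _).trans (Deriv.congr hd1 (.refl _) hd2)⟩

lemma exists_basic {A : Type} (t : CE A) : ∃ s, Basic s ∧ Deriv AxRp t s := by
  induction t with
  | tt => exact ⟨.tt, .tt, .refl _⟩
  | ff => exact ⟨.ff, .ff, .refl _⟩
  | atom a => exact ⟨.cond .tt (.atom a) .ff, .cond a .tt .ff, (Deriv.cp3 _).symm⟩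
  | cond t1 t2 t3 ih1 ih2 ih3 =>
    obtain ⟨s1, hs1, hd1⟩ := ih1
    obtain ⟨s2, hs2, hd2⟩ := ih2
    obtain ⟨s3, hs3, hd3⟩ := ih3
    obtain ⟨s, hs, hd⟩ := basic_cond hs2 s1 s3 hs1 hs3
    exact ⟨s, hs, (Deriv.congr hd1 hd2 hd3).trans hd⟩

lemma ctx_lemma {A : Type} {p : CE A} (hp : Basic p) : ∀ a : A,
    (∃ pl, RpBasic pl ∧ rpOK a pl ∧
      ∀ z, Deriv AxRp (.cond p (.atom a) z) (.cond pl (.atom a) z)) ∧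
    (∃ pr, RpBasic pr ∧ rpOK a pr ∧
      ∀ z, Deriv AxRp (.cond z (.atom a) p) (.cond z (.atom a) pr)) := by
  induction hp with
  | tt =>
    exact fun a => ⟨⟨.tt, .tt, trivial, fun z => .refl _⟩,
                    ⟨.tt, .tt, trivial, fun z => .refl _⟩⟩
  | ff =>
    exact fun a => ⟨⟨.ff, .ff, trivial, fun z => .refl _⟩,
                    ⟨.ff, .ff, trivial, fun z => .refl _⟩⟩
  | @cond p1 p2 b h1 h2 ih1 ih2 =>
    intro a
    by_cases hba : b = a
    · subst hba
      obtain ⟨p1l, hb1, hok1, hd1⟩ := (ih1 b).1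
      obtain ⟨p2r, hb2, hok2, hd2⟩ := (ih2 b).2
      constructor
      · refine ⟨.cond p1l (.atom b) p1l, .cond b hb1 hb1 hok1 hok1, Or.inr rfl, fun z => ?_⟩
        exact (Deriv.ax (Or.inl ⟨b, p1, p2, z, rfl, rfl⟩)).trans
          ((Deriv.congr (hd1 p1) (.refl _) (.refl _)).trans
            (Deriv.ax (Or.inl ⟨b, p1l, p1, z, rfl, rfl⟩)))
      · refine ⟨.cond p2r (.atom b) p2r, .cond b hb2 hb2 hok2 hok2, Or.inr rfl, fun z => ?_⟩
        exact (Deriv.ax (Or.inr ⟨b, z, p1, p2, rfl, rfl⟩)).trans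
          ((Deriv.congr (.refl _) (.refl _) (hd2 p2)).trans
            (Deriv.ax (Or.inr ⟨b, z, p2, p2r, rfl, rfl⟩)))
    · obtain ⟨p1l, hb1, hok1, hd1⟩ := (ih1 b).1
      obtain ⟨p2r, hb2, hok2, hd2⟩ := (ih2 b).2
      have hq : Deriv AxRp (.cond p1 (.atom b) p2) (.cond p1l (.atom b) p2r) :=
        (hd1 p2).trans (hd2 p1l)
      have hrb : RpBasic (CE.cond p1l (.atom b) p2r) := .cond b hb1 hb2 hok1 hok2
      have hok : rpOK a (CE.cond p1l (.atom b) p2r) := Or.inl hba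
      exact ⟨⟨_, hrb, hok, fun z => Deriv.congr hq (.refl _) (.refl _)⟩,
             ⟨_, hrb, hok, fun z => Deriv.congr (.refl _) (.refl _) hq⟩⟩

lemma basic_to_rp {A : Type} {p : CE A} (hp : Basic p) :
    ∃ p', RpBasic p' ∧ Deriv AxRp p p' := by
  cases hp with
  | tt => exact ⟨.tt, .tt, .refl _⟩
  | ff => exact ⟨.ff, .ff, .refl _⟩
  | @cond p1 p2 b h1 h2 =>
    obtain ⟨p1l, hb1, hok1, hd1⟩ := (ctx_lemma h1 b).1
    obtain ⟨p2r, hb2, hok2, hd2⟩ := (ctx_lemma h2 b).2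
    exact ⟨.cond p1l (.atom b) p2r, .cond b hb1 hb2 hok1 hok2, (hd1 p2).trans (hd2 p1l)⟩

theorem exists_rp_basic_form (A : Type) (t : CE A) :
    ∃ t' : CE A, RpBasic t' ∧ Deriv AxRp t t' := by
  obtain ⟨s, hs, hd⟩ := exists_basic t
  obtain ⟨t', hrp, hd'⟩ := basic_to_rp hs
  exact ⟨t', hrp, hd.trans hd'⟩
end

section
/- In CP_mem, the equation x ◁ y ▷ ((z ◁ y ▷ u) ◁ v ▷ w) = x ◁ y ▷ (u ◁ v ▷ w) is derivable. -/
/-- The axiom (CPmem): x ◁ y ▷ (z ◁ u ▷ (v ◁ y ▷ w)) = x ◁ y ▷ (z ◁ u ▷ w). -/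
def AxMem {A : Type} : CE A → CE A → Prop := fun s t =>
  ∃ x y z u v w : CE A,
    s = .cond x y (.cond z u (.cond v y w)) ∧ t = .cond x y (.cond z u w)

/-- Flip: a ◁ b ▷ c = c ◁ (F ◁ b ▷ T) ▷ a. -/
lemma deriv_flip {A : Type} {Ax : CE A → CE A → Prop} (a b c : CE A) :
    Deriv Ax (.cond a b c) (.cond c (.cond .ff b .tt) a) := by
  apply Deriv.symm
  exact (Deriv.cp4 c .ff b .tt a).trans
    (Deriv.congr (Deriv.cp2 c a) (Deriv.refl b) (Deriv.cp1 c a))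

theorem cpmem_symmetric_variant (A : Type) (x y z u v w : CE A) :
    Deriv AxMem (.cond x y (.cond (.cond z y u) v w)) (.cond x y (.cond u v w)) := by
  have h1 : Deriv AxMem (.cond x y (.cond (.cond z y u) v w))
      (.cond x y (.cond w (.cond .ff v .tt) (.cond z y u))) :=
    Deriv.congr (Deriv.refl x) (Deriv.refl y) (deriv_flip _ v w)
  have h2 : Deriv AxMem (.cond x y (.cond w (.cond .ff v .tt) (.cond z y u)))
      (.cond x y (.cond w (.cond .ff v .tt) u)) :=
    Deriv.ax ⟨x, y, w, .cond .ff v .tt, z, u, rfl, rfl⟩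
  have h3 : Deriv AxMem (.cond x y (.cond w (.cond .ff v .tt) u))
      (.cond x y (.cond u v w)) :=
    Deriv.congr (Deriv.refl x) (Deriv.refl y) (Deriv.symm (deriv_flip u v w))
  exact (h1.trans h2).trans h3
end

section
/- For each closed conditional expression t over a finite set A of atoms, there exists a mem-basic form t' over A with CP_mem ⊢ t = t', where a mem-basic form over A' ⊆ A is T, F, or t1 ◁ a ▷ t2 with a ∈ A' and t1, t2 mem-basic forms over A' \ {a}. -/
/-- mem-basic forms over a finite set A' of atoms. -/
inductive MemBasic {A : Type} [DecidableEq A] : Finset A → CE A → Prop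
  | tt (A' : Finset A) : MemBasic A' .tt
  | ff (A' : Finset A) : MemBasic A' .ff
  | cond {A' : Finset A} {t1 t2 : CE A} {a : A} : a ∈ A' →
      MemBasic (A'.erase a) t1 → MemBasic (A'.erase a) t2 →
      MemBasic A' (.cond t1 (.atom a) t2)
namespace MemProof

variable {A : Type}

/-- Basic forms: decision trees with atoms as conditions. -/
inductive Basic {A : Type} : CE A → Prop
  | tt : Basic .tt
  | ff : Basic .ff
  | cond {t1 t2 : CE A} (a : A) : Basic t1 → Basic t2 → Basic (.cond t1 (.atom a) t2)

def csize {A : Type} : CE A → Nat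
  | .cond t1 _ t2 => csize t1 + csize t2 + 1
  | _ => 0

def conds {A : Type} [DecidableEq A] : CE A → Finset A
  | .cond t1 (.atom b) t2 => insert b (conds t1 ∪ conds t2)
  | _ => ∅

lemma axm (x y z u v w : CE A) :
    Deriv AxMem (.cond x y (.cond z u (.cond v y w))) (.cond x y (.cond z u w)) :=
  .ax ⟨x, y, z, u, v, w, rfl, rfl⟩

lemma depth1 (x y v w : CE A) :
    Deriv AxMem (.cond x y (.cond v y w)) (.cond x y w) :=
  .trans (.congr (.refl x) (.refl y) (.symm (.cp2 .tt _)))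
    (.trans (axm x y .tt .ff v w) (.congr (.refl x) (.refl y) (.cp2 .tt w)))

lemma wrap (x y z u w : CE A) :
    Deriv AxMem (.cond x y (.cond z u w)) (.cond x y (.cond z u (.cond x y w))) :=
  .symm (axm x y z u x w)

lemma swap (c X Y : CE A) :
    Deriv AxMem (.cond X (.cond .ff c .tt) Y) (.cond Y c X) :=
  .trans (.cp4 X .ff c .tt Y) (.congr (.cp2 X Y) (.refl c) (.cp1 X Y))

/-- guard: `G a false` is the atom itself (right/false context), `G a true` its negation. -/
def G (a : A) : Bool → CE A
  | false => .atom a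
  | true => .cond .ff (.atom a) .tt

/-- reduce every `a`-conditional to its true branch (s = true) or false branch (s = false). -/
def red [DecidableEq A] (a : A) (s : Bool) : CE A → CE A
  | .cond t1 (.atom b) t2 =>
      if b = a then (if s then red a s t1 else red a s t2)
      else .cond (red a s t1) (.atom b) (red a s t2)
  | t => t

lemma gen [DecidableEq A] (a : A) {t : CE A} (h : Basic t) :
    ∀ (s : Bool) (x : CE A),
      Deriv AxMem (.cond x (G a s) t) (.cond x (G a s) (red a s t)) := by
  induction h with
  | tt => intro s x; exact .refl _
  | ff => intro s x; exact .refl _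
  | @cond t1 t2 b h1 h2 ih1 ih2 =>
    intro s x
    by_cases hb : b = a
    · subst hb
      cases s with
      | false =>
        have e : red b false (.cond t1 (.atom b) t2) = red b false t2 := by
          simp [red]
        rw [e]
        exact .trans (depth1 x (.atom b) t1 t2) (ih2 false x)
      | true =>
        have e : red b true (.cond t1 (.atom b) t2) = red b true t1 := by
          simp [red]
        rw [e]
        refine .trans (.congr (.refl x) (.refl _) (.symm (swap (.atom b) t2 t1))) ?_
        exact .trans (depth1 x (G b true) t2 t1) (ih1 true x)
    · have e : red a s (.cond t1 (.atom b) t2)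
          = .cond (red a s t1) (.atom b) (red a s t2) := by
        simp [red, hb]
      rw [e]
      refine .trans (wrap x (G a s) t1 (.atom b) t2) ?_
      refine .trans (.congr (.refl x) (.refl _)
        (.congr (.refl t1) (.refl _) (ih2 s x))) ?_
      refine .trans (axm x (G a s) t1 (.atom b) x (red a s t2)) ?_
      refine .trans (.congr (.refl x) (.refl _)
        (.symm (swap (.atom b) (red a s t2) t1))) ?_
      refine .trans (wrap x (G a s) (red a s t2) (.cond .ff (.atom b) .tt) t1) ?_
      refine .trans (.congr (.refl x) (.refl _)
        (.congr (.refl _) (.refl _) (ih1 s x))) ?_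
      refine .trans (axm x (G a s) (red a s t2) (.cond .ff (.atom b) .tt) x (red a s t1)) ?_
      exact .congr (.refl x) (.refl _) (swap (.atom b) (red a s t2) (red a s t1))

lemma basic_red [DecidableEq A] (a : A) (s : Bool) {t : CE A} (h : Basic t) :
    Basic (red a s t) := by
  induction h with
  | tt => exact .tt
  | ff => exact .ff
  | @cond t1 t2 b h1 h2 ih1 ih2 =>
    by_cases hb : b = a
    · rw [show red a s (.cond t1 (.atom b) t2)
          = (if s then red a s t1 else red a s t2) by simp [red, hb]]
      cases s
      · simpa using ih2
      · simpa using ih1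
    · rw [show red a s (.cond t1 (.atom b) t2)
          = .cond (red a s t1) (.atom b) (red a s t2) by simp [red, hb]]
      exact .cond b ih1 ih2

lemma csize_red [DecidableEq A] (a : A) (s : Bool) {t : CE A} (h : Basic t) :
    csize (red a s t) ≤ csize t := by
  induction h with
  | tt => simp [red]
  | ff => simp [red]
  | @cond t1 t2 b h1 h2 ih1 ih2 =>
    by_cases hb : b = a
    · rw [show red a s (.cond t1 (.atom b) t2)
          = (if s then red a s t1 else red a s t2) by simp [red, hb]]
      cases s <;> simp [csize] <;> omega
    · rw [show red a s (.cond t1 (.atom b) t2)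
          = .cond (red a s t1) (.atom b) (red a s t2) by simp [red, hb]]
      simp [csize]; omega

lemma conds_red [DecidableEq A] (a : A) (s : Bool) {t : CE A} (h : Basic t) :
    conds (red a s t) ⊆ (conds t).erase a := by
  induction h with
  | tt => simp [red, conds]
  | ff => simp [red, conds]
  | @cond t1 t2 b h1 h2 ih1 ih2 =>
    by_cases hb : b = a
    · rw [show red a s (.cond t1 (.atom b) t2)
          = (if s then red a s t1 else red a s t2) by simp [red, hb]]
      intro c hc
      cases s
      · have := ih2 (by simpa using hc)
        simp only [Finset.mem_erase, conds] at this ⊢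
        exact ⟨this.1, by simp [Finset.mem_insert, this.2]⟩
      · have := ih1 (by simpa using hc)
        simp only [Finset.mem_erase, conds] at this ⊢
        exact ⟨this.1, by simp [Finset.mem_insert, this.2]⟩
    · rw [show red a s (.cond t1 (.atom b) t2)
          = .cond (red a s t1) (.atom b) (red a s t2) by simp [red, hb]]
      intro c hc
      simp only [conds, Finset.mem_insert, Finset.mem_union] at hc
      simp only [conds, Finset.mem_erase, Finset.mem_insert, Finset.mem_union]
      rcases hc with rfl | hc | hc
      · exact ⟨hb, Or.inl rfl⟩
      · have := ih1 hc; rw [Finset.mem_erase] at this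
        exact ⟨this.1, Or.inr (Or.inl this.2)⟩
      · have := ih2 hc; rw [Finset.mem_erase] at this
        exact ⟨this.1, Or.inr (Or.inr this.2)⟩

def norm [DecidableEq A] : Nat → CE A → CE A
  | n+1, .cond t1 (.atom b) t2 =>
      .cond (norm n (red b true t1)) (.atom b) (norm n (red b false t2))
  | _, t => t

lemma deriv_norm [DecidableEq A] :
    ∀ (n : Nat) {t : CE A}, Basic t → csize t ≤ n → Deriv AxMem t (norm n t) := by
  intro n
  induction n with
  | zero =>
    intro t h hs
    cases h with
    | tt => exact .refl _
    | ff => exact .refl _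
    | cond => simp [csize] at hs
  | succ n ih =>
    intro t h hs
    cases h with
    | tt => exact .refl _
    | ff => exact .refl _
    | @cond t1 t2 b h1 h2 =>
      have hs1 : csize t1 ≤ n := by simp [csize] at hs; omega
      have hs2 : csize t2 ≤ n := by simp [csize] at hs; omega
      have le1 : csize (red b true t1) ≤ n := (csize_red b true h1).trans hs1
      have le2 : csize (red b false t2) ≤ n := (csize_red b false h2).trans hs2
      refine .trans (.symm (swap (.atom b) t2 t1)) ?_
      refine .trans (gen b h1 true t2) ?_
      refine .trans (swap (.atom b) t2 (red b true t1)) ?_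
      refine .trans (gen b h2 false (red b true t1)) ?_
      exact .congr (ih (basic_red b true h1) le1) (.refl _)
        (ih (basic_red b false h2) le2)

lemma mem_norm [DecidableEq A] :
    ∀ (n : Nat) {t : CE A}, Basic t → csize t ≤ n →
      ∀ A' : Finset A, conds t ⊆ A' → MemBasic A' (norm n t) := by
  intro n
  induction n with
  | zero =>
    intro t h hs A' hsub
    cases h with
    | tt => exact .tt A'
    | ff => exact .ff A'
    | cond => simp [csize] at hs
  | succ n ih =>
    intro t h hs A' hsub
    cases h with
    | tt => exact .tt A'
    | ff => exact .ff A'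
    | @cond t1 t2 b h1 h2 =>
      have hs1 : csize t1 ≤ n := by simp [csize] at hs; omega
      have hs2 : csize t2 ≤ n := by simp [csize] at hs; omega
      have hbA : b ∈ A' := hsub (by simp [conds])
      have sub1 : conds t1 ⊆ conds (CE.cond t1 (.atom b) t2) := by
        intro c hc; simp [conds, Finset.mem_insert, hc]
      have sub2 : conds t2 ⊆ conds (CE.cond t1 (.atom b) t2) := by
        intro c hc; simp [conds, Finset.mem_insert, hc]
      refine MemBasic.cond hbA ?_ ?_
      · exact ih (basic_red b true h1) ((csize_red b true h1).trans hs1) _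
          ((conds_red b true h1).trans
            (Finset.erase_subset_erase b (sub1.trans hsub)))
      · exact ih (basic_red b false h2) ((csize_red b false h2).trans hs2) _
          ((conds_red b false h2).trans
            (Finset.erase_subset_erase b (sub2.trans hsub)))

lemma compose : ∀ {b : CE A}, Basic b → ∀ {u v : CE A}, Basic u → Basic v →
    ∃ w, Basic w ∧ Deriv AxMem (.cond u b v) w := by
  intro b hb
  induction hb with
  | tt => intro u v hu hv; exact ⟨u, hu, .cp1 u v⟩
  | ff => intro u v hu hv; exact ⟨v, hv, .cp2 u v⟩
  | @cond c1 c2 a h1 h2 ih1 ih2 =>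
    intro u v hu hv
    obtain ⟨w1, hw1, d1⟩ := ih1 hu hv
    obtain ⟨w2, hw2, d2⟩ := ih2 hu hv
    exact ⟨.cond w1 (.atom a) w2, .cond a hw1 hw2,
      .trans (.cp4 u c1 (.atom a) c2 v) (.congr d1 (.refl _) d2)⟩

lemma to_basic : ∀ t : CE A, ∃ b, Basic b ∧ Deriv AxMem t b := by
  intro t
  induction t with
  | tt => exact ⟨.tt, .tt, .refl _⟩
  | ff => exact ⟨.ff, .ff, .refl _⟩
  | atom a => exact ⟨.cond .tt (.atom a) .ff, .cond a .tt .ff, .symm (.cp3 _)⟩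
  | cond t1 t2 t3 ih1 ih2 ih3 =>
    obtain ⟨b1, hb1, d1⟩ := ih1
    obtain ⟨b2, hb2, d2⟩ := ih2
    obtain ⟨b3, hb3, d3⟩ := ih3
    obtain ⟨w, hw, dw⟩ := compose hb2 hb1 hb3
    exact ⟨w, hw, .trans (.congr d1 d2 d3) dw⟩

end MemProof

theorem exists_mem_basic_form (A : Type) [Fintype A] [DecidableEq A] (t : CE A) :
    ∃ t' : CE A, MemBasic Finset.univ t' ∧ Deriv AxMem t t' := by
  obtain ⟨b, hb, d⟩ := MemProof.to_basic t
  exact ⟨MemProof.norm (MemProof.csize b) b,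
    MemProof.mem_norm _ hb le_rfl _ (Finset.subset_univ _),
    .trans d (MemProof.deriv_norm _ hb le_rfl)⟩
end
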